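/- Suppose A + λ̂B ≻ 0, λ̲ is finite with a + λ̲b ∈ Range(A + λ̲B), and {v₁,…,v_r} is an (A + λ̂B)-orthonormal basis of Null(A + λ̲B). Let λ ∈ (λ̲, λ̄), λ ≠ λ̂, let z = (A + λ̂B)⁻¹(a + λ̂b), and let α > 0. Then x* solves (A + λB)x = -(a + λb) if and only if y* = x* + z solves [A + λB + α Σᵢ (A + λ̂B)vᵢvᵢᵀ(A + λ̂B)] y = (λ - λ̂)(Bz - b). -/

import Mathlib

open Matrix

private lemma dot_sum' {n r : ℕ} (u : Fin n → ℝ) (f : Fin r → Fin n → ℝ) :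
    u ⬝ᵥ ∑ j, f j = ∑ j, u ⬝ᵥ f j := by
  simp only [dotProduct, Finset.sum_apply, Finset.mul_sum]
  exact Finset.sum_comm

private lemma symm_dot {n : ℕ} {S : Matrix (Fin n) (Fin n) ℝ} (hS : S.IsSymm)
    (u w : Fin n → ℝ) : u ⬝ᵥ S.mulVec w = S.mulVec u ⬝ᵥ w := by
  rw [dotProduct_mulVec]
  nth_rewrite 1 [← hS]
  rw [vecMul_transpose]

theorem stmt8 {n r : ℕ} (A B : Matrix (Fin n) (Fin n) ℝ) (a b : Fin n → ℝ)
    (hA : A.IsSymm) (hB : B.IsSymm)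
    (lh : ℝ) (hP : (A + lh • B).PosDef)
    (hbdd : BddBelow {t : ℝ | (A + t • B).PosSemidef})
    (lb : ℝ) (hlb : lb = sInf {t : ℝ | (A + t • B).PosSemidef})
    (hrange : ∃ x, (A + lb • B).mulVec x = -(a + lb • b))
    (v : Fin r → Fin n → ℝ)
    (hnull : ∀ i, (A + lb • B).mulVec (v i) = 0)
    (hspan : Submodule.span ℝ (Set.range v) = LinearMap.ker (A + lb • B).mulVecLin)
    (horth : ∀ i j, v i ⬝ᵥ (A + lh • B).mulVec (v j) = if i = j then 1 else 0)
    (l : ℝ) (hlPD : (A + l • B).PosDef) (hne : l ≠ lh)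
    (z : Fin n → ℝ) (hz : z = (A + lh • B)⁻¹.mulVec (a + lh • b))
    (α : ℝ) (hα : 0 < α) (x : Fin n → ℝ) :
    (A + l • B).mulVec x = -(a + l • b) ↔
      (A + l • B + α • ∑ i, vecMulVec ((A + lh • B).mulVec (v i))
          ((A + lh • B).mulVec (v i))).mulVec (x + z) =
        (l - lh) • (B.mulVec z - b) := by
  set M := A + l • B with hM
  set Mh := A + lh • B with hMh
  set N := A + lb • B with hN
  have hMs : M.IsSymm := by
    simp [Matrix.IsSymm, hM, transpose_add, transpose_smul, hA.eq, hB.eq]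
  have hMhs : Mh.IsSymm := by
    simp [Matrix.IsSymm, hMh, transpose_add, transpose_smul, hA.eq, hB.eq]
  have hNs : N.IsSymm := by
    simp [Matrix.IsSymm, hN, transpose_add, transpose_smul, hA.eq, hB.eq]
  set w : Fin r → Fin n → ℝ := fun i => Mh.mulVec (v i) with hw
  -- z satisfies Mh z = a + lh b
  have hMz : Mh.mulVec z = a + lh • b := by
    rw [hz, mulVec_mulVec, Matrix.mul_nonsing_inv _ (isUnit_iff_ne_zero.mpr hP.det_pos.ne'),
      one_mulVec]
  have hMhv : ∀ i, w i = (lh - lb) • B.mulVec (v i) := by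
    intro i
    have h : Mh = N + (lh - lb) • B := by rw [hMh, hN]; module
    show Mh *ᵥ v i = (lh - lb) • B *ᵥ v i
    rw [h, add_mulVec, hnull i, zero_add, smul_mulVec]
  have hMv : ∀ i, M.mulVec (v i) = (l - lb) • B.mulVec (v i) := by
    intro i
    have h : M = N + (l - lb) • B := by rw [hM, hN]; module
    rw [h, add_mulVec, hnull i, zero_add, smul_mulVec]
  have hvne : ∀ i, v i ≠ 0 := by
    intro i h
    have h1 := horth i i
    simp [h] at h1
  have hlhlb : ∀ _ : Fin r, lb < lh := by
    intro i
    refine lt_of_le_of_ne (hlb ▸ csInf_le hbdd hP.posSemidef) fun h => ?_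
    have h1 := horth i i
    rw [show Mh.mulVec (v i) = w i from rfl, hMhv i, ← h, sub_self, zero_smul,
      dotProduct_zero] at h1
    simp at h1
  have hllb : ∀ _ : Fin r, lb < l := by
    intro i
    refine lt_of_le_of_ne (hlb ▸ csInf_le hbdd hlPD.posSemidef) fun h => ?_
    have h1 := hlPD.dotProduct_mulVec_pos (hvne i)
    rw [show star (v i) = v i from rfl, hMv i, ← h, sub_self, zero_smul,
      dotProduct_zero] at h1
    exact lt_irrefl 0 h1
  -- key: v i ⬝ (Bz - b) = 0
  have hkey : ∀ i, v i ⬝ᵥ (B.mulVec z - b) = 0 := by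
    intro i
    obtain ⟨x0, hx0⟩ := hrange
    have h0 : v i ⬝ᵥ (a + lb • b) = 0 := by
      have h : v i ⬝ᵥ N.mulVec x0 = 0 := by
        rw [symm_dot hNs, hnull i, zero_dotProduct]
      rw [hx0, dotProduct_neg] at h
      linarith
    have h3 : v i ⬝ᵥ a + lb * (v i ⬝ᵥ b) = 0 := by
      rw [dotProduct_add, dotProduct_smul, smul_eq_mul] at h0; exact h0
    have h2 : v i ⬝ᵥ a + lh * (v i ⬝ᵥ b) = (lh - lb) * (B.mulVec (v i) ⬝ᵥ z) := by
      have h2a : v i ⬝ᵥ Mh.mulVec z = v i ⬝ᵥ a + lh * (v i ⬝ᵥ b) := by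
        rw [hMz, dotProduct_add, dotProduct_smul, smul_eq_mul]
      have h2b : v i ⬝ᵥ Mh.mulVec z = (lh - lb) * (B.mulVec (v i) ⬝ᵥ z) := by
        rw [symm_dot hMhs, show Mh.mulVec (v i) = w i from rfl, hMhv i,
          smul_dotProduct, smul_eq_mul]
      rw [← h2a, h2b]
    have h4 : B.mulVec (v i) ⬝ᵥ z = v i ⬝ᵥ b := by
      have hne' : lh - lb ≠ 0 := sub_ne_zero.mpr (hlhlb i).ne'
      have h5 : (lh - lb) * (B.mulVec (v i) ⬝ᵥ z) = (lh - lb) * (v i ⬝ᵥ b) := by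
        rw [← h2]; linear_combination h3
      exact mul_left_cancel₀ hne' h5
    rw [dotProduct_sub, symm_dot hB, h4, sub_self]
  -- sum formula
  have hsum : ∀ y, (∑ j, vecMulVec (w j) (w j)).mulVec y = ∑ j, (w j ⬝ᵥ y) • w j := by
    intro y
    ext k
    simp only [mulVec, dotProduct, Matrix.sum_apply, Finset.sum_apply,
      vecMulVec_apply, Pi.smul_apply, smul_eq_mul, Finset.sum_mul, Finset.mul_sum]
    rw [Finset.sum_comm]
    exact Finset.sum_congr rfl fun j _ => Finset.sum_congr rfl fun m _ => by ring
  have hcorr : ∀ y, (∀ i, w i ⬝ᵥ y = 0) →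
      (α • ∑ i, vecMulVec (w i) (w i)).mulVec y = 0 := by
    intro y hy
    rw [smul_mulVec, hsum]
    simp [hy]
  have hMzval : M.mulVec z = (a + lh • b) + (l - lh) • B.mulVec z := by
    have h : M = Mh + (l - lh) • B := by rw [hM, hMh]; module
    rw [h, add_mulVec, hMz, smul_mulVec]
  constructor
  · intro hx
    have hMy : M.mulVec (x + z) = (l - lh) • (B.mulVec z - b) := by
      rw [mulVec_add, hx, hMzval]; module
    have horthy : ∀ i, w i ⬝ᵥ (x + z) = 0 := by
      intro i
      have hc : (l - lb) * (B.mulVec (v i) ⬝ᵥ (x + z)) = 0 := by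
        have h : M.mulVec (v i) ⬝ᵥ (x + z) = (l - lh) * (v i ⬝ᵥ (B.mulVec z - b)) := by
          rw [← symm_dot hMs, hMy, dotProduct_smul, smul_eq_mul]
        rw [hMv i, smul_dotProduct, smul_eq_mul, hkey i, mul_zero] at h
        exact h
      have hc0 : B.mulVec (v i) ⬝ᵥ (x + z) = 0 :=
        (mul_eq_zero.mp hc).resolve_left (sub_ne_zero.mpr (hllb i).ne')
      rw [hMhv i, smul_dotProduct, hc0, smul_zero]
    rw [add_mulVec, hMy, hcorr _ horthy, add_zero]
  · intro heq
    have horthy : ∀ i, w i ⬝ᵥ (x + z) = 0 := by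
      intro i
      have hdi : v i ⬝ᵥ ((M + α • ∑ j, vecMulVec (w j) (w j)).mulVec (x + z)) = 0 := by
        rw [heq, dotProduct_smul, hkey i, smul_zero]
      have hexp : v i ⬝ᵥ ((M + α • ∑ j, vecMulVec (w j) (w j)).mulVec (x + z)) =
          ((l - lb) + α * (lh - lb)) * (B.mulVec (v i) ⬝ᵥ (x + z)) := by
        rw [add_mulVec, dotProduct_add, smul_mulVec, hsum, dotProduct_smul]
        have hterm1 : v i ⬝ᵥ M.mulVec (x + z) = (l - lb) * (B.mulVec (v i) ⬝ᵥ (x + z)) := by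
          rw [symm_dot hMs, hMv i, smul_dotProduct, smul_eq_mul]
        have hterm2 : v i ⬝ᵥ (∑ j, (w j ⬝ᵥ (x + z)) • w j) =
            (lh - lb) * (B.mulVec (v i) ⬝ᵥ (x + z)) := by
          rw [dot_sum']
          have h : ∀ j, v i ⬝ᵥ ((w j ⬝ᵥ (x + z)) • w j) =
              (w j ⬝ᵥ (x + z)) * (if i = j then 1 else 0) := fun j => by
            rw [dotProduct_smul, smul_eq_mul, hw]
            congr 1
            exact horth i j
          rw [Finset.sum_congr rfl fun j _ => h j]
          simp only [mul_ite, mul_one, mul_zero]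
          rw [Finset.sum_ite_eq (Finset.univ : Finset (Fin r)) i
            (fun j => w j ⬝ᵥ (x + z))]
          simp only [Finset.mem_univ, if_true]
          rw [hMhv i, smul_dotProduct, smul_eq_mul]
        rw [hterm1, hterm2, smul_eq_mul]
        ring
      have hpos : (0:ℝ) < (l - lb) + α * (lh - lb) := by
        have h1 := hllb i
        have h2 := hlhlb i
        nlinarith
      have hc0 : B.mulVec (v i) ⬝ᵥ (x + z) = 0 := by
        have := hexp ▸ hdi
        exact (mul_eq_zero.mp this).resolve_left hpos.ne'
      rw [hMhv i, smul_dotProduct, hc0, smul_zero]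
    have hMy : M.mulVec (x + z) = (l - lh) • (B.mulVec z - b) := by
      rw [add_mulVec, hcorr _ horthy, add_zero] at heq
      exact heq
    have h7 : M.mulVec x = M.mulVec (x + z) - M.mulVec z := by
      rw [mulVec_add]; abel
    rw [h7, hMy, hMzval]
    module
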